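/- Let A be a perfect F_p-algebra and S = Spec A. Every extension of the fppf group scheme G_{a,S} by itself whose pushout along the Artin–Schreier isogeny t ↦ t − t^p : G_{a,S} → G_{a,S} splits, is itself split. Equivalently, the endomorphism 1−F of Ext¹(G_{a,S}, G_{a,S}) (in abelian fppf sheaves) is injective. -/
import Mathlib

open MvPolynomial Finset

section ArtinSchreierAux
variable {A : Type*} [CommRing A]

variable {A : Type*} [CommRing A]

/-- `d(U^m)` as a 2-variable polynomial. -/
noncomputable def dmon (A : Type*) [CommRing A] (m : ℕ) : MvPolynomial (Fin 2) A :=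
  (X 0 + X 1) ^ m - X 0 ^ m - X 1 ^ m

lemma IsHomog.pow' {σ : Type*} {φ : MvPolynomial σ A} {n : ℕ} (h : φ.IsHomogeneous n) (k : ℕ) :
    (φ ^ k).IsHomogeneous (k * n) := by
  induction k with
  | zero => simpa using isHomogeneous_one σ A
  | succ k ih => rw [pow_succ, Nat.succ_mul]; exact ih.mul h

lemma dmon_isHomogeneous (m : ℕ) : (dmon A m).IsHomogeneous m := by
  have hx : ∀ i : Fin 2, ((X i : MvPolynomial (Fin 2) A) ^ m).IsHomogeneous m := fun i => by
    simpa using IsHomog.pow' (isHomogeneous_X A i) m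
  have hs : (((X 0 + X 1 : MvPolynomial (Fin 2) A)) ^ m).IsHomogeneous m := by
    simpa using IsHomog.pow' ((isHomogeneous_X A (0:Fin 2)).add (isHomogeneous_X A 1)) m
  exact (hs.sub (hx 0)).sub (hx 1)

lemma comp_dmon (m k : ℕ) :
    homogeneousComponent k (dmon A m) = if k = m then dmon A m else 0 :=
  homogeneousComponent_of_mem ((mem_homogeneousSubmodule _ _).2 (dmon_isHomogeneous m))

/-- Degree-`m` component of a coboundary. -/
lemma comp_cobound (f : Polynomial A) (m : ℕ) :
    homogeneousComponent m
      (Polynomial.aeval (X 0 + X 1 : MvPolynomial (Fin 2) A) f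
        - Polynomial.aeval (X 0 : MvPolynomial (Fin 2) A) f
        - Polynomial.aeval (X 1 : MvPolynomial (Fin 2) A) f)
    = f.coeff m • dmon A m := by
  rw [Polynomial.aeval_eq_sum_range (X 0 + X 1 : MvPolynomial (Fin 2) A),
    Polynomial.aeval_eq_sum_range (X 0 : MvPolynomial (Fin 2) A),
    Polynomial.aeval_eq_sum_range (X 1 : MvPolynomial (Fin 2) A),
    ← Finset.sum_sub_distrib, ← Finset.sum_sub_distrib]
  have : ∀ i : ℕ, f.coeff i • (X 0 + X 1 : MvPolynomial (Fin 2) A) ^ i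
      - f.coeff i • (X 0 : MvPolynomial (Fin 2) A) ^ i
      - f.coeff i • (X 1 : MvPolynomial (Fin 2) A) ^ i = f.coeff i • dmon A i := by
    intro i; rw [dmon, smul_sub, smul_sub]
  simp_rw [this, map_sum, map_smul, comp_dmon]
  rw [Finset.sum_congr rfl (fun i _ => by rw [smul_ite, smul_zero]),
    Finset.sum_ite_eq (Finset.range (f.natDegree + 1)) m]
  split_ifs with h
  · rfl
  · rw [Polynomial.coeff_eq_zero_of_natDegree_lt (by simpa using h), zero_smul]

variable {p : ℕ} [Fact p.Prime] [CharP A p]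

/-- Degree-`m` component of `c ^ p`. -/
lemma comp_pow_char (c : MvPolynomial (Fin 2) A) (m : ℕ) :
    homogeneousComponent m (c ^ p)
      = if p ∣ m then (homogeneousComponent (m / p) c) ^ p else 0 := by
  haveI : ExpChar (MvPolynomial (Fin 2) A) p := ExpChar.prime Fact.out
  have hp0 : 0 < p := (Fact.out : p.Prime).pos
  have hc : c ^ p = ∑ k ∈ Finset.range (c.totalDegree + 1), (homogeneousComponent k c) ^ p := by
    rw [← sum_pow_char, sum_homogeneousComponent]
  rw [hc, map_sum]
  have hterm : ∀ k : ℕ, homogeneousComponent m ((homogeneousComponent k c) ^ p)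
      = if m = k * p then (homogeneousComponent k c) ^ p else 0 := by
    intro k
    have : ((homogeneousComponent k c) ^ p).IsHomogeneous (p * k) :=
      IsHomog.pow' (homogeneousComponent_isHomogeneous k c) p
    rw [homogeneousComponent_of_mem ((mem_homogeneousSubmodule _ _).2 this)]
    rw [mul_comm k p]
  simp_rw [hterm]
  by_cases hdvd : p ∣ m
  · obtain ⟨n, rfl⟩ := hdvd
    rw [if_pos ⟨n, rfl⟩, Nat.mul_div_cancel_left n hp0]
    have heq : ∀ k : ℕ, (p * n = k * p) = (k = n) := by
      intro k
      simp only [eq_iff_iff]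
      constructor
      · intro h
        rw [mul_comm p n] at h
        exact (Nat.eq_of_mul_eq_mul_right hp0 h.symm)
      · rintro rfl; ring
    simp_rw [heq]
    rw [Finset.sum_ite_eq' (Finset.range (c.totalDegree + 1)) n]
    split_ifs with h
    · rfl
    · rw [homogeneousComponent_eq_zero _ _ (by simpa using h), zero_pow hp0.ne']
  · rw [if_neg hdvd, Finset.sum_eq_zero]
    intro k _
    rw [if_neg]
    rintro rfl
    exact hdvd ⟨k, mul_comm k p⟩

lemma key_comp (c : MvPolynomial (Fin 2) A) (f : Polynomial A)
    (hsplit : c - c ^ p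
        = Polynomial.aeval (X 0 + X 1 : MvPolynomial (Fin 2) A) f
          - Polynomial.aeval (X 0 : MvPolynomial (Fin 2) A) f
          - Polynomial.aeval (X 1 : MvPolynomial (Fin 2) A) f) :
    ∀ m : ℕ, ∃ a : A, homogeneousComponent m c = a • dmon A m := by
  haveI : ExpChar (MvPolynomial (Fin 2) A) p := ExpChar.prime Fact.out
  have hp0 : 0 < p := (Fact.out : p.Prime).pos
  intro m
  induction m using Nat.strong_induction_on with
  | _ m IH =>
  have h := congrArg (homogeneousComponent m) hsplit
  rw [map_sub, comp_cobound, comp_pow_char] at h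
  rcases Nat.eq_zero_or_pos m with hm | hm
  · subst hm
    refine ⟨-(MvPolynomial.coeff 0 c), ?_⟩
    rw [homogeneousComponent_zero, dmon, smul_eq_C_mul]
    simp only [pow_zero, map_neg]
    ring
  · by_cases hdvd : p ∣ m
    · rw [if_pos hdvd] at h
      obtain ⟨a, ha⟩ := IH (m / p) (Nat.div_lt_self hm (Fact.out : p.Prime).one_lt)
      refine ⟨f.coeff m + a ^ p, ?_⟩
      have hdp : (dmon A (m / p)) ^ p = dmon A m := by
        rw [dmon, dmon, sub_pow_char, sub_pow_char, ← pow_mul, ← pow_mul, ← pow_mul,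
          Nat.div_mul_cancel hdvd]
      rw [ha, smul_pow, hdp] at h
      rw [add_smul]
      linear_combination h
    · rw [if_neg hdvd] at h
      exact ⟨f.coeff m, by linear_combination h⟩

end ArtinSchreierAux

/-- Let `A` be a perfect `𝔽_p`-algebra, `S = Spec A`. Every extension
of the fppf group scheme `G_{a,S}` by itself whose pushout along the Artin–Schreier
isogeny `t ↦ t − t^p` splits, is itself split.  In cocycle terms: extensions of
`G_{a,S}` by `G_{a,S}` are classified by symmetric 2-cocycles
`c(U₁,U₂) ∈ A[U₁,U₂]` modulo coboundaries `d(f)(U₁,U₂) = f(U₁+U₂) − f(U₁) − f(U₂)`,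
and the pushout along `1 − F` has cocycle `c − c^p`; so the statement reads: if
`c − c^p` is a coboundary then so is `c`, i.e. `1 − F` is injective on
`Ext¹(G_{a,S}, G_{a,S})`. -/
theorem artinSchreier_pushout_split_implies_split
    (p : ℕ) [Fact p.Prime] {A : Type*} [CommRing A] [CharP A p]
    [ExpChar A p] [PerfectRing A p]
    (c : MvPolynomial (Fin 2) A)
    -- symmetry of the cocycle:
    (hsym : MvPolynomial.rename (Equiv.swap (0 : Fin 2) 1) c = c)
    -- cocycle condition `c(U₁,U₂+U₃) + c(U₂,U₃) = c(U₁,U₂) + c(U₁+U₂,U₃)`: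
    (hcoc : MvPolynomial.aeval
          ![(MvPolynomial.X 0 : MvPolynomial (Fin 3) A), MvPolynomial.X 1 + MvPolynomial.X 2] c
        + MvPolynomial.aeval
          ![(MvPolynomial.X 1 : MvPolynomial (Fin 3) A), MvPolynomial.X 2] c
      = MvPolynomial.aeval
          ![(MvPolynomial.X 0 : MvPolynomial (Fin 3) A), MvPolynomial.X 1] c
        + MvPolynomial.aeval
          ![(MvPolynomial.X 0 + MvPolynomial.X 1 : MvPolynomial (Fin 3) A), MvPolynomial.X 2] c)
    -- the pushout along `1 − F` splits:
    (f : Polynomial A)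
    (hsplit : c - c ^ p
        = Polynomial.aeval (MvPolynomial.X 0 + MvPolynomial.X 1 : MvPolynomial (Fin 2) A) f
          - Polynomial.aeval (MvPolynomial.X 0 : MvPolynomial (Fin 2) A) f
          - Polynomial.aeval (MvPolynomial.X 1 : MvPolynomial (Fin 2) A) f) :
    ∃ g : Polynomial A,
      c = Polynomial.aeval (MvPolynomial.X 0 + MvPolynomial.X 1 : MvPolynomial (Fin 2) A) g
          - Polynomial.aeval (MvPolynomial.X 0 : MvPolynomial (Fin 2) A) g
          - Polynomial.aeval (MvPolynomial.X 1 : MvPolynomial (Fin 2) A) g := by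
  obtain ⟨a, ha⟩ := Classical.axiomOfChoice (key_comp c f hsplit)
  refine ⟨∑ m ∈ Finset.range (c.totalDegree + 1), Polynomial.C (a m) * Polynomial.X ^ m, ?_⟩
  have haev : ∀ s : MvPolynomial (Fin 2) A,
      Polynomial.aeval s (∑ m ∈ Finset.range (c.totalDegree + 1),
        Polynomial.C (a m) * Polynomial.X ^ m)
      = ∑ m ∈ Finset.range (c.totalDegree + 1), MvPolynomial.C (a m) * s ^ m := by
    intro s
    rw [map_sum]
    refine Finset.sum_congr rfl fun m _ => ?_
    rw [map_mul, map_pow, Polynomial.aeval_C, Polynomial.aeval_X, MvPolynomial.algebraMap_eq]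
  rw [haev, haev, haev, ← Finset.sum_sub_distrib, ← Finset.sum_sub_distrib]
  conv_lhs => rw [← sum_homogeneousComponent c]
  refine Finset.sum_congr rfl fun m _ => ?_
  rw [ha m, smul_eq_C_mul, dmon]
  ring
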